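/- Let g₀ = g_{α₀,β₀,γ₀,τ₀} ∈ G with α₀ ≠ 0. Then the centralizer of g₀ in G is exactly the set L = { g_{α, β₀(e^α − 1)/(e^{α₀} − 1), (γ₀/α₀)·α, τ} : α, τ ∈ ℝ }, and L is an abelian subgroup of G (isomorphic to ℝ², parametrized by (α, τ)). -/

import Mathlib

noncomputable section

/-- The map `g_{α,β,γ,τ} : (x,y) ↦ (x + βy + γ·log y + τ, e^α·y)`. -/
def gmap (α β γ τ : ℝ) (p : ℝ × ℝ) : ℝ × ℝ :=
  (p.1 + β * p.2 + γ * Real.log p.2 + τ, Real.exp α * p.2)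

/-- The upper half-plane as a type. -/
abbrev Hsub := {p : ℝ × ℝ // 0 < p.2}

/-- A permutation of `ℍ⁺` is given by `g_{α,β,γ,τ}`. -/
def IsG (e : Equiv.Perm Hsub) (α β γ τ : ℝ) : Prop :=
  ∀ p : Hsub, (e p : ℝ × ℝ) = gmap α β γ τ (p : ℝ × ℝ)

/-- The group `G` of all `g_{α,β,γ,τ}`, as a set of permutations of `ℍ⁺`. -/
def GSet : Set (Equiv.Perm Hsub) := {e | ∃ α β γ τ : ℝ, IsG e α β γ τ}

/-- The set `L = { g_{α, β₀(e^α-1)/(e^{α₀}-1), (γ₀/α₀)α, τ} : α, τ ∈ ℝ }`. -/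
def LSet (α₀ β₀ γ₀ : ℝ) : Set (Equiv.Perm Hsub) :=
  {e | ∃ α τ : ℝ,
    IsG e α (β₀ * (Real.exp α - 1) / (Real.exp α₀ - 1)) (γ₀ / α₀ * α) τ}

lemma gmap_pos (α β γ τ : ℝ) {p : ℝ × ℝ} (h : 0 < p.2) : 0 < (gmap α β γ τ p).2 :=
  mul_pos (Real.exp_pos α) h

lemma gmap_comp (α β γ τ α' β' γ' τ' : ℝ) {p : ℝ × ℝ} (h : 0 < p.2) :
    gmap α β γ τ (gmap α' β' γ' τ' p)
      = gmap (α + α') (β' + β * Real.exp α') (γ + γ') (τ + τ' + γ * α') p := by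
  have hlog : Real.log (Real.exp α' * p.2) = α' + Real.log p.2 := by
    rw [Real.log_mul (Real.exp_ne_zero α') (ne_of_gt h), Real.log_exp]
  unfold gmap
  refine Prod.ext ?_ ?_
  · simp only [hlog]; ring
  · simp only [Real.exp_add]; ring

/-- `g_{α,β,γ,τ}` as a permutation of `ℍ⁺`. -/
def gperm (α β γ τ : ℝ) : Equiv.Perm Hsub where
  toFun p := ⟨gmap α β γ τ p, gmap_pos _ _ _ _ p.2⟩
  invFun p := ⟨gmap (-α) (-β * Real.exp (-α)) (-γ) (-τ + γ * α) p, gmap_pos _ _ _ _ p.2⟩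
  left_inv p := by
    apply Subtype.ext
    show gmap (-α) (-β * Real.exp (-α)) (-γ) (-τ + γ * α) (gmap α β γ τ p) = p
    rw [gmap_comp _ _ _ _ _ _ _ _ p.2]
    have h1 : -α + α = 0 := by ring
    have h2 : β + -β * Real.exp (-α) * Real.exp α = 0 := by
      rw [mul_assoc, ← Real.exp_add]; simp
    have h3 : -γ + γ = 0 := by ring
    have h4 : -τ + γ * α + τ + -γ * α = 0 := by ring
    rw [h1, h2, h3, h4]
    simp [gmap]
  right_inv p := by
    apply Subtype.ext
    show gmap α β γ τ (gmap (-α) (-β * Real.exp (-α)) (-γ) (-τ + γ * α) p) = p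
    rw [gmap_comp _ _ _ _ _ _ _ _ p.2]
    have h1 : α + -α = 0 := by ring
    have h2 : -β * Real.exp (-α) + β * Real.exp (-α) = 0 := by ring
    have h3 : γ + -γ = 0 := by ring
    have h4 : τ + (-τ + γ * α) + γ * -α = 0 := by ring
    rw [h1, h2, h3, h4]
    simp [gmap]

lemma isG_gperm (α β γ τ : ℝ) : IsG (gperm α β γ τ) α β γ τ := fun _ => rfl

lemma isG_unique' {e e' : Equiv.Perm Hsub} {α β γ τ : ℝ}
    (h : IsG e α β γ τ) (h' : IsG e' α β γ τ) : e = e' := by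
  apply Equiv.ext
  intro p
  exact Subtype.ext ((h p).trans (h' p).symm)

lemma isG_mul {e e' : Equiv.Perm Hsub} {α β γ τ α' β' γ' τ' : ℝ}
    (h : IsG e α β γ τ) (h' : IsG e' α' β' γ' τ') :
    IsG (e * e') (α + α') (β' + β * Real.exp α') (γ + γ') (τ + τ' + γ * α') := by
  intro p
  show ((e (e' p)) : ℝ × ℝ) = _
  rw [h (e' p), h' p, gmap_comp _ _ _ _ _ _ _ _ p.2]

lemma isG_params {e : Equiv.Perm Hsub} {α β γ τ α' β' γ' τ' : ℝ}
    (h : IsG e α β γ τ) (h' : IsG e α' β' γ' τ') :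
    α = α' ∧ β = β' ∧ γ = γ' ∧ τ = τ' := by
  set E : ℝ := Real.exp 1 with hE
  have hE1 : E ≠ 1 := by
    have : Real.exp 0 < Real.exp 1 := Real.exp_lt_exp.mpr one_pos
    simp only [Real.exp_zero] at this
    rw [hE]
    exact this.ne'
  have q1 := (h ⟨(0, 1), one_pos⟩).symm.trans (h' ⟨(0, 1), one_pos⟩)
  have q2 := (h ⟨(0, Real.exp 1), Real.exp_pos 1⟩).symm.trans
    (h' ⟨(0, Real.exp 1), Real.exp_pos 1⟩)
  have q3 := (h ⟨(0, Real.exp 2), Real.exp_pos 2⟩).symm.trans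
    (h' ⟨(0, Real.exp 2), Real.exp_pos 2⟩)
  simp only [gmap, Prod.mk.injEq, Real.log_one, Real.log_exp] at q1 q2 q3
  obtain ⟨e1, e1'⟩ := q1
  obtain ⟨e2, _⟩ := q2
  obtain ⟨e3, _⟩ := q3
  have hα : α = α' := by
    have := e1'
    field_simp at this
    exact Real.exp_injective this
  have hexp2 : Real.exp 2 = E * E := by
    rw [hE, ← Real.exp_add]; norm_num
  rw [hexp2] at e3
  have key : (β - β') * (E - 1) ^ 2 = 0 := by linear_combination e3 - 2 * e2 + e1
  have hβ : β = β' := by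
    have hne : (E - 1) ^ 2 ≠ 0 := pow_ne_zero _ (sub_ne_zero.mpr hE1)
    have := mul_eq_zero.mp key
    rcases this with h | h
    · linarith [sub_eq_zero.mp h]
    · exact absurd h hne
  have hγ : γ = γ' := by linear_combination e2 - e1 + (1 - E) * hβ
  have hτ : τ = τ' := by linear_combination e1 - hβ
  exact ⟨hα, hβ, hγ, hτ⟩

/-- The homomorphism `ℝ² → Perm ℍ⁺` parametrizing `L`. -/
def lphi (α₀ β₀ γ₀ : ℝ) : Multiplicative (ℝ × ℝ) →* Equiv.Perm Hsub :=
  MonoidHom.mk'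
    (fun q => gperm (Multiplicative.toAdd q).1
      (β₀ * (Real.exp (Multiplicative.toAdd q).1 - 1) / (Real.exp α₀ - 1))
      (γ₀ / α₀ * (Multiplicative.toAdd q).1)
      ((Multiplicative.toAdd q).2 + γ₀ / α₀ * (Multiplicative.toAdd q).1 ^ 2 / 2))
    (by
      intro a b
      set x := Multiplicative.toAdd a
      set y := Multiplicative.toAdd b
      have hxy : Multiplicative.toAdd (a * b) = x + y := rfl
      have hmul := isG_mul (isG_gperm x.1 (β₀ * (Real.exp x.1 - 1) / (Real.exp α₀ - 1))
          (γ₀ / α₀ * x.1) (x.2 + γ₀ / α₀ * x.1 ^ 2 / 2))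
        (isG_gperm y.1 (β₀ * (Real.exp y.1 - 1) / (Real.exp α₀ - 1))
          (γ₀ / α₀ * y.1) (y.2 + γ₀ / α₀ * y.1 ^ 2 / 2))
      have hL : IsG ((fun q => gperm (Multiplicative.toAdd q).1
          (β₀ * (Real.exp (Multiplicative.toAdd q).1 - 1) / (Real.exp α₀ - 1))
          (γ₀ / α₀ * (Multiplicative.toAdd q).1)
          ((Multiplicative.toAdd q).2
            + γ₀ / α₀ * (Multiplicative.toAdd q).1 ^ 2 / 2)) (a * b))
          (x.1 + y.1) (β₀ * (Real.exp (x.1 + y.1) - 1) / (Real.exp α₀ - 1))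
          (γ₀ / α₀ * (x.1 + y.1)) (x.2 + y.2 + γ₀ / α₀ * (x.1 + y.1) ^ 2 / 2) :=
        isG_gperm _ _ _ _
      refine isG_unique' ?_ hmul
      have hb : β₀ * (Real.exp (x.1 + y.1) - 1) / (Real.exp α₀ - 1)
          = β₀ * (Real.exp y.1 - 1) / (Real.exp α₀ - 1)
            + β₀ * (Real.exp x.1 - 1) / (Real.exp α₀ - 1) * Real.exp y.1 := by
        rw [Real.exp_add, div_mul_eq_mul_div, ← add_div]
        congr 1
        ring
      have hg : γ₀ / α₀ * (x.1 + y.1) = γ₀ / α₀ * x.1 + γ₀ / α₀ * y.1 := by ring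
      have ht : x.2 + y.2 + γ₀ / α₀ * (x.1 + y.1) ^ 2 / 2
          = x.2 + γ₀ / α₀ * x.1 ^ 2 / 2 + (y.2 + γ₀ / α₀ * y.1 ^ 2 / 2)
            + γ₀ / α₀ * x.1 * y.1 := by ring
      rw [hb, hg, ht] at hL
      exact hL)

theorem stmt5 (α₀ β₀ γ₀ τ₀ : ℝ) (hα₀ : α₀ ≠ 0)
    (g₀ : Equiv.Perm Hsub) (hg₀ : IsG g₀ α₀ β₀ γ₀ τ₀) :
    -- the centralizer of `g₀` in `G` is exactly `L`
    {e ∈ GSet | e * g₀ = g₀ * e} = LSet α₀ β₀ γ₀ ∧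
    -- `L` is an abelian subgroup of `G`, isomorphic to `ℝ²`
    (∃ L : Subgroup (Equiv.Perm Hsub),
      (L : Set (Equiv.Perm Hsub)) = LSet α₀ β₀ γ₀ ∧
      (∀ a ∈ L, ∀ b ∈ L, a * b = b * a) ∧
      Nonempty (Multiplicative (ℝ × ℝ) ≃* L)) := by
  have hD : Real.exp α₀ - 1 ≠ 0 := by
    rw [sub_ne_zero]
    intro h
    exact hα₀ (Real.exp_injective (h.trans Real.exp_zero.symm))
  constructor
  · ext e
    simp only [Set.mem_setOf_eq, Set.mem_sep_iff]
    constructor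
    · rintro ⟨⟨α, β, γ, τ, he⟩, hcomm⟩
      have h1 := isG_mul he hg₀
      have h2 := isG_mul hg₀ he
      rw [hcomm] at h1
      obtain ⟨_, hb, _, ht⟩ := isG_params h1 h2
      have hβ : β = β₀ * (Real.exp α - 1) / (Real.exp α₀ - 1) := by
        rw [eq_div_iff hD]
        linear_combination hb
      have hγ : γ = γ₀ / α₀ * α := by
        rw [div_mul_eq_mul_div, eq_div_iff hα₀]
        linear_combination ht
      exact ⟨α, τ, by rwa [← hβ, ← hγ]⟩
    · rintro ⟨α, τ, he⟩
      refine ⟨⟨α, _, _, τ, he⟩, ?_⟩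
      have h1 := isG_mul he hg₀
      have h2 := isG_mul hg₀ he
      have e1 : α + α₀ = α₀ + α := by ring
      have e2 : β₀ + β₀ * (Real.exp α - 1) / (Real.exp α₀ - 1) * Real.exp α₀
          = β₀ * (Real.exp α - 1) / (Real.exp α₀ - 1) + β₀ * Real.exp α := by
        field_simp
        ring
      have e3 : γ₀ / α₀ * α + γ₀ = γ₀ + γ₀ / α₀ * α := by ring
      have e4 : τ + τ₀ + γ₀ / α₀ * α * α₀ = τ₀ + τ + γ₀ * α := by
        field_simp
        ring
      rw [e1, e2, e3, e4] at h1
      exact isG_unique' h1 h2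
  · refine ⟨(lphi α₀ β₀ γ₀).range, ?_, ?_, ?_⟩
    · ext e
      simp only [MonoidHom.coe_range, Set.mem_range, LSet, Set.mem_setOf_eq]
      constructor
      · rintro ⟨q, rfl⟩
        exact ⟨(Multiplicative.toAdd q).1,
          (Multiplicative.toAdd q).2 + γ₀ / α₀ * (Multiplicative.toAdd q).1 ^ 2 / 2,
          isG_gperm _ _ _ _⟩
      · rintro ⟨α, τ, he⟩
        refine ⟨Multiplicative.ofAdd (α, τ - γ₀ / α₀ * α ^ 2 / 2), ?_⟩
        refine isG_unique' ?_ he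
        show IsG (gperm α _ _ (τ - γ₀ / α₀ * α ^ 2 / 2 + γ₀ / α₀ * α ^ 2 / 2)) _ _ _ _
        have : τ - γ₀ / α₀ * α ^ 2 / 2 + γ₀ / α₀ * α ^ 2 / 2 = τ := by ring
        rw [this]
        exact isG_gperm _ _ _ _
    · rintro a ⟨q, rfl⟩ b ⟨q', rfl⟩
      rw [← map_mul, ← map_mul, mul_comm]
    · have hinj : Function.Injective (lphi α₀ β₀ γ₀) := by
        intro a b hab
        have ha : IsG (lphi α₀ β₀ γ₀ a) (Multiplicative.toAdd a).1
            (β₀ * (Real.exp (Multiplicative.toAdd a).1 - 1) / (Real.exp α₀ - 1))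
            (γ₀ / α₀ * (Multiplicative.toAdd a).1)
            ((Multiplicative.toAdd a).2 + γ₀ / α₀ * (Multiplicative.toAdd a).1 ^ 2 / 2) :=
          isG_gperm _ _ _ _
        have hb : IsG (lphi α₀ β₀ γ₀ b) (Multiplicative.toAdd b).1
            (β₀ * (Real.exp (Multiplicative.toAdd b).1 - 1) / (Real.exp α₀ - 1))
            (γ₀ / α₀ * (Multiplicative.toAdd b).1)
            ((Multiplicative.toAdd b).2 + γ₀ / α₀ * (Multiplicative.toAdd b).1 ^ 2 / 2) :=
          isG_gperm _ _ _ _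
        rw [hab] at ha
        obtain ⟨h1, _, _, h4⟩ := isG_params ha hb
        have h2 : (Multiplicative.toAdd a).2 = (Multiplicative.toAdd b).2 := by
          rw [h1] at h4
          linarith
        have : Multiplicative.toAdd a = Multiplicative.toAdd b := Prod.ext h1 h2
        exact this
      exact ⟨MonoidHom.ofInjective hinj⟩
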